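/- Let A be a quasitriangular Hopf algebra with R-matrix ρ = Σ e⊗e', augmented by a grouplike element G with s²(x) = GxG⁻¹ for all x. Then the element X = Σ e·s⁻²(e')·G⁻¹ is in the center of A. -/

import Mathlib

open scoped TensorProduct
open Coalgebra HopfAlgebra

section
variable {k : Type*} [Field k] {A : Type*} [Ring A] [HopfAlgebra k A]
noncomputable def c2 (f g : A →ₗ[k] A) : A ⊗[k] A →ₗ[k] A := LinearMap.mul' k A ∘ₗ TensorProduct.map f g
@[simp] lemma c2_tmul (f g : A →ₗ[k] A) (x y : A) : c2 f g (x ⊗ₜ y) = f x * g y := by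
  simp [c2, LinearMap.mul'_apply]
lemma csl {a : A} (r : Coalgebra.Repr k a (A × A)) :
    ∑ i ∈ r.index, Coalgebra.counit (R := k) (r.left i) • r.right i = a := by
  have h := congrArg (TensorProduct.lid k A) (Coalgebra.sum_counit_tmul_eq r)
  simp only [map_sum, TensorProduct.lid_tmul, one_smul] at h
  exact h
lemma csr {a : A} (r : Coalgebra.Repr k a (A × A)) :
    ∑ i ∈ r.index, Coalgebra.counit (R := k) (r.right i) • r.left i = a := by
  have h := congrArg (TensorProduct.rid k A) (Coalgebra.sum_tmul_counit_eq r)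
  simp only [map_sum, TensorProduct.rid_tmul, one_smul] at h
  exact h
lemma antipode_one' : HopfAlgebra.antipode (R := k) (1 : A) = 1 := by
  have h := HopfAlgebra.mul_antipode_rTensor_comul_apply (R := k) (a := (1 : A))
  simpa [Algebra.TensorProduct.one_def] using h
noncomputable def t3 (f g h : A →ₗ[k] A) : A ⊗[k] (A ⊗[k] A) →ₗ[k] A ⊗[k] A :=
  (TensorProduct.map (c2 f g) h) ∘ₗ (TensorProduct.assoc k A A A).symm.toLinearMap
@[simp] lemma t3_tmul (f g h : A →ₗ[k] A) (u v w : A) :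
    t3 f g h (u ⊗ₜ (v ⊗ₜ w)) = (f u * g v) ⊗ₜ[k] h w := by
  simp [t3]
lemma KA {a : A} (r : Coalgebra.Repr k a (A × A)) (r2 : ∀ i : r.ι, Coalgebra.Repr k (r.right i) (A × A)) :
    ∑ i ∈ r.index, ∑ j ∈ (r2 i).index,
      (HopfAlgebra.antipode (R := k) (r.left i) * (r2 i).left j) ⊗ₜ[k] (r2 i).right j
      = (1:A) ⊗ₜ[k] a := by
  classical
  set S := HopfAlgebra.antipode (R := k) (A := A) with hS
  have CE := Coalgebra.sum_tmul_tmul_eq r (fun i => ℛ k (r.left i)) r2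
  have h := congrArg (t3 S LinearMap.id LinearMap.id) CE
  simp only [map_sum, t3_tmul, LinearMap.id_coe, id_eq] at h
  rw [← h]
  have : ∀ i ∈ r.index,
      ∑ j ∈ (ℛ k (r.left i)).index,
        (S ((ℛ k (r.left i)).left j) * (ℛ k (r.left i)).right j) ⊗ₜ[k] r.right i
      = (1:A) ⊗ₜ[k] (Coalgebra.counit (R := k) (r.left i) • r.right i) := by
    intro i _
    rw [← TensorProduct.sum_tmul, HopfAlgebra.sum_antipode_mul_eq_smul (ℛ k (r.left i))]
    rw [TensorProduct.smul_tmul]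
  rw [Finset.sum_congr rfl this, ← TensorProduct.tmul_sum, csl r]

lemma comul_contract (y : A) :
    c2 (LinearMap.id) (HopfAlgebra.antipode (R := k)) (Coalgebra.comul y)
      = Coalgebra.counit (R := k) y • (1:A) := by
  have h1 : c2 (LinearMap.id) (HopfAlgebra.antipode (R := k) (A := A))
      = LinearMap.mul' k A ∘ₗ (HopfAlgebra.antipode (R := k)).lTensor A := by
    apply TensorProduct.ext'
    intro x y
    simp [LinearMap.mul'_apply]
  rw [h1]
  simp only [LinearMap.comp_apply, HopfAlgebra.mul_antipode_lTensor_comul_apply]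
  rw [Algebra.algebraMap_eq_smul_one]

lemma comul_contract' (y : A) :
    c2 (HopfAlgebra.antipode (R := k)) (LinearMap.id) (Coalgebra.comul y)
      = Coalgebra.counit (R := k) y • (1:A) := by
  have h1 : c2 (HopfAlgebra.antipode (R := k) (A := A)) (LinearMap.id)
      = LinearMap.mul' k A ∘ₗ (HopfAlgebra.antipode (R := k)).rTensor A := by
    apply TensorProduct.ext'
    intro x y
    simp [LinearMap.mul'_apply]
  rw [h1]
  simp only [LinearMap.comp_apply, HopfAlgebra.mul_antipode_rTensor_comul_apply]
  rw [Algebra.algebraMap_eq_smul_one]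

lemma antipode_mul' (a b : A) :
    HopfAlgebra.antipode (R := k) (a * b)
      = HopfAlgebra.antipode (R := k) b * HopfAlgebra.antipode (R := k) a := by
  classical
  set S := HopfAlgebra.antipode (R := k) (A := A) with hS
  set ra := ℛ k a
  set rb := ℛ k b
  set ra2 : ∀ i : ra.ι, Coalgebra.Repr k (ra.right i) (A × A) := fun i => ℛ k (ra.right i) with hra2
  set rb2 : ∀ j : rb.ι, Coalgebra.Repr k (rb.right j) (A × A) := fun j => ℛ k (rb.right j) with hrb2
  set X : A := ∑ j ∈ rb.index, ∑ n ∈ (rb2 j).index, ∑ i ∈ ra.index, ∑ m ∈ (ra2 i).index,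
      (S (rb.left j) * ((S (ra.left i) * (ra2 i).left m) * (rb2 j).left n))
        * S ((ra2 i).right m * (rb2 j).right n) with hX
  have way1 : X = S (a * b) := by
    have e1 : ∀ (j : rb.ι) (n : (rb2 j).ι),
        ∑ i ∈ ra.index, ∑ m ∈ (ra2 i).index,
          (S (rb.left j) * ((S (ra.left i) * (ra2 i).left m) * (rb2 j).left n))
            * S ((ra2 i).right m * (rb2 j).right n)
        = (S (rb.left j) * (rb2 j).left n) * S (a * (rb2 j).right n) := by
      intro j n
      have h2 := congrArg (c2 (LinearMap.mulLeft k (S (rb.left j)) ∘ₗ LinearMap.mulRight k ((rb2 j).left n))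
        ((S : A →ₗ[k] A) ∘ₗ LinearMap.mulRight k ((rb2 j).right n))) (KA ra ra2)
      simp only [map_sum, c2_tmul, LinearMap.comp_apply, LinearMap.mulLeft_apply,
        LinearMap.mulRight_apply, one_mul] at h2
      exact h2
    rw [hX, Finset.sum_congr rfl (fun j _ => Finset.sum_congr rfl (fun n _ => e1 j n))]
    have h3 := congrArg (c2 (LinearMap.id) ((S : A →ₗ[k] A) ∘ₗ LinearMap.mulLeft k a)) (KA rb rb2)
    simp only [map_sum, c2_tmul, LinearMap.comp_apply, LinearMap.mulLeft_apply,
      LinearMap.id_coe, id_eq, one_mul] at h3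
    exact h3
  have key : ∀ (z w : A) (rz : Coalgebra.Repr k z (A × A)) (rw' : Coalgebra.Repr k w (A × A)),
      ∑ m ∈ rz.index, ∑ n ∈ rw'.index,
        (rz.left m * rw'.left n) * S (rz.right m * rw'.right n)
      = (Coalgebra.counit (R := k) z * Coalgebra.counit (R := k) w) • (1:A) := by
    intro z w rz rw'
    have hcm : Coalgebra.comul (R := k) (z * w)
        = ∑ m ∈ rz.index, ∑ n ∈ rw'.index, (rz.left m * rw'.left n) ⊗ₜ[k] (rz.right m * rw'.right n) := by
      rw [Bialgebra.comul_mul, ← rz.eq, ← rw'.eq, Finset.sum_mul_sum]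
      simp [Algebra.TensorProduct.tmul_mul_tmul]
    have h4 := comul_contract (k := k) (z * w)
    rw [hcm] at h4
    simp only [map_sum, c2_tmul, LinearMap.id_coe, id_eq] at h4
    rw [h4, Bialgebra.counit_mul]
  have way2 : X = S b * S a := by
    have e2 : ∀ (j : rb.ι) (n : (rb2 j).ι) (i : ra.ι) (m : (ra2 i).ι),
        (S (rb.left j) * ((S (ra.left i) * (ra2 i).left m) * (rb2 j).left n))
          * S ((ra2 i).right m * (rb2 j).right n)
        = (S (rb.left j) * S (ra.left i)) * (((ra2 i).left m * (rb2 j).left n)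
            * S ((ra2 i).right m * (rb2 j).right n)) := by
      intros; simp [mul_assoc]
    rw [hX]
    calc ∑ j ∈ rb.index, ∑ n ∈ (rb2 j).index, ∑ i ∈ ra.index, ∑ m ∈ (ra2 i).index,
          (S (rb.left j) * ((S (ra.left i) * (ra2 i).left m) * (rb2 j).left n))
            * S ((ra2 i).right m * (rb2 j).right n)
        = ∑ j ∈ rb.index, ∑ i ∈ ra.index, ∑ m ∈ (ra2 i).index, ∑ n ∈ (rb2 j).index,
          (S (rb.left j) * S (ra.left i)) * (((ra2 i).left m * (rb2 j).left n)
            * S ((ra2 i).right m * (rb2 j).right n)) := by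
          apply Finset.sum_congr rfl; intro j _
          rw [Finset.sum_comm]
          apply Finset.sum_congr rfl; intro i _
          rw [Finset.sum_comm]
          apply Finset.sum_congr rfl; intro m _
          apply Finset.sum_congr rfl; intro n _
          exact e2 j n i m
      _ = ∑ j ∈ rb.index, ∑ i ∈ ra.index,
          (S (rb.left j) * S (ra.left i)) * ((Coalgebra.counit (R := k) (ra.right i)
            * Coalgebra.counit (R := k) (rb.right j)) • (1:A)) := by
          apply Finset.sum_congr rfl; intro j _
          apply Finset.sum_congr rfl; intro i _
          rw [← key _ _ (ra2 i) (rb2 j)]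
          simp only [Finset.mul_sum]
      _ = (∑ j ∈ rb.index, Coalgebra.counit (R := k) (rb.right j) • S (rb.left j))
            * (∑ i ∈ ra.index, Coalgebra.counit (R := k) (ra.right i) • S (ra.left i)) := by
          rw [Finset.sum_mul_sum]
          apply Finset.sum_congr rfl; intro j _
          apply Finset.sum_congr rfl; intro i _
          rw [mul_smul_comm, mul_one, smul_mul_assoc, mul_smul_comm, smul_smul]
          rw [mul_comm (Coalgebra.counit (R := k) (rb.right j)) _]
      _ = S b * S a := by
          congr 1
          · simp only [← map_smul]; rw [← map_sum, csr rb]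
          · simp only [← map_smul]; rw [← map_sum, csr ra]
  rw [← way1, way2]
noncomputable def m3 (f g h : A →ₗ[k] A) : A ⊗[k] (A ⊗[k] A) →ₗ[k] A :=
  (LinearMap.mul' k A) ∘ₗ t3 f g h
@[simp] lemma m3_tmul (f g h : A →ₗ[k] A) (u v w : A) :
    m3 f g h (u ⊗ₜ (v ⊗ₜ w)) = (f u * g v) * h w := by
  simp [m3, LinearMap.mul'_apply]

noncomputable def rev3 : A ⊗[k] (A ⊗[k] A) →ₗ[k] A ⊗[k] (A ⊗[k] A) :=
  (LinearMap.lTensor A (TensorProduct.comm k A A).toLinearMap)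
    ∘ₗ (TensorProduct.assoc k A A A).toLinearMap
    ∘ₗ (LinearMap.rTensor A (TensorProduct.comm k A A).toLinearMap)
    ∘ₗ (TensorProduct.assoc k A A A).symm.toLinearMap
    ∘ₗ (LinearMap.lTensor A (TensorProduct.comm k A A).toLinearMap)
@[simp] lemma rev3_tmul (p q w : A) :
    rev3 (p ⊗ₜ[k] (q ⊗ₜ[k] w)) = w ⊗ₜ[k] (q ⊗ₜ[k] p) := by
  simp [rev3]

lemma main_VX {ι : Type*} [Fintype ι] (e e' : ι → A)
    (ρ : A ⊗[k] A) (hρ : ρ = ∑ j, e j ⊗ₜ[k] e' j)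
    (h1 : ∀ x : A, ρ * Coalgebra.comul x
        = (TensorProduct.comm k A A) (Coalgebra.comul x) * ρ)
    (h3 : ∑ j, (TensorProduct.assoc k A A A) ((Coalgebra.comul (R := k) (e j)) ⊗ₜ[k] e' j)
        = (∑ j, e j ⊗ₜ[k] ((1 : A) ⊗ₜ[k] e' j)) * (∑ j, (1 : A) ⊗ₜ[k] (e j ⊗ₜ[k] e' j))) :
    ∀ x : A,
      (∑ j, HopfAlgebra.antipode (R := k) (HopfAlgebra.antipode (R := k) (e j)) * e' j) * x
      = HopfAlgebra.antipode (R := k) (HopfAlgebra.antipode (R := k) x)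
          * (∑ j, HopfAlgebra.antipode (R := k) (HopfAlgebra.antipode (R := k) (e j)) * e' j) := by
  classical
  set S := HopfAlgebra.antipode (R := k) (A := A) with hS
  set c : A := ∑ j, Coalgebra.counit (R := k) (e j) • e' j with hc
  set V : A := ∑ j, S (S (e j)) * e' j with hV
  set ρh : A ⊗[k] A := ∑ j, S (e j) ⊗ₜ[k] e' j with hρh
  -- (1) c is central
  have hcent : ∀ y : A, c * y = y * c := by
    set E : A ⊗[k] A →ₐ[k] A :=
      ((Algebra.TensorProduct.lid k A).toAlgHom.comp
        (Algebra.TensorProduct.map (Bialgebra.counitAlgHom k A) (AlgHom.id k A))) with hE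
    have hEt : ∀ (x y : A), E (x ⊗ₜ y) = Coalgebra.counit (R := k) x • y := by
      intro x y
      simp [hE, Algebra.TensorProduct.lid_tmul]
    have hEΔ : ∀ y : A, E (Coalgebra.comul (R := k) y) = y := by
      intro y
      conv_lhs => rw [← (ℛ k y).eq]
      rw [map_sum]
      simp only [hEt]
      exact csl (ℛ k y)
    have hEΔ' : ∀ y : A, E ((TensorProduct.comm k A A) (Coalgebra.comul (R := k) y)) = y := by
      intro y
      conv_lhs => rw [← (ℛ k y).eq]
      rw [map_sum, map_sum]
      simp only [TensorProduct.comm_tmul, hEt]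
      exact csr (ℛ k y)
    have hEρ : E ρ = c := by
      rw [hρ, map_sum]
      simp only [hEt, hc]
    intro y
    have h := congrArg E (h1 y)
    rw [map_mul, map_mul, hEΔ, hEΔ', hEρ] at h
    exact h
  -- (2) quasi-inverse relations
  have hprod : (∑ j, e j ⊗ₜ[k] ((1 : A) ⊗ₜ[k] e' j)) * (∑ j, (1 : A) ⊗ₜ[k] (e j ⊗ₜ[k] e' j))
      = ∑ i, ∑ j, e i ⊗ₜ[k] (e j ⊗ₜ[k] (e' i * e' j)) := by
    rw [Finset.sum_mul_sum]
    simp [Algebra.TensorProduct.tmul_mul_tmul]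
  have L2a : ρh * ρ = (1:A) ⊗ₜ[k] c := by
    have h' := congrArg (t3 (S : A →ₗ[k] A) LinearMap.id LinearMap.id) h3
    rw [hprod] at h'
    simp only [map_sum] at h'
    have lhsj : ∀ j, t3 (S : A →ₗ[k] A) LinearMap.id LinearMap.id
        ((TensorProduct.assoc k A A A) ((Coalgebra.comul (R := k) (e j)) ⊗ₜ[k] e' j))
        = (1:A) ⊗ₜ[k] (Coalgebra.counit (R := k) (e j) • e' j) := by
      intro j
      conv_lhs => rw [← (ℛ k (e j)).eq]
      rw [TensorProduct.sum_tmul, map_sum, map_sum]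
      simp only [TensorProduct.assoc_tmul, t3_tmul, LinearMap.id_coe, id_eq]
      rw [← TensorProduct.sum_tmul, HopfAlgebra.sum_antipode_mul_eq_smul (ℛ k (e j)),
        TensorProduct.smul_tmul]
    rw [Finset.sum_congr rfl (fun j _ => lhsj j), ← TensorProduct.tmul_sum] at h'
    simp only [t3_tmul, LinearMap.id_coe, id_eq] at h'
    rw [hρh, hρ, Finset.sum_mul_sum]
    simp only [Algebra.TensorProduct.tmul_mul_tmul]
    rw [← hc] at h'
    exact h'.symm
  have L2b : ρ * ρh = (1:A) ⊗ₜ[k] c := by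
    have h' := congrArg (t3 LinearMap.id (S : A →ₗ[k] A) LinearMap.id) h3
    rw [hprod] at h'
    simp only [map_sum] at h'
    have lhsj : ∀ j, t3 LinearMap.id (S : A →ₗ[k] A) LinearMap.id
        ((TensorProduct.assoc k A A A) ((Coalgebra.comul (R := k) (e j)) ⊗ₜ[k] e' j))
        = (1:A) ⊗ₜ[k] (Coalgebra.counit (R := k) (e j) • e' j) := by
      intro j
      conv_lhs => rw [← (ℛ k (e j)).eq]
      rw [TensorProduct.sum_tmul, map_sum, map_sum]
      simp only [TensorProduct.assoc_tmul, t3_tmul, LinearMap.id_coe, id_eq]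
      rw [← TensorProduct.sum_tmul, HopfAlgebra.sum_mul_antipode_eq_smul (ℛ k (e j)),
        TensorProduct.smul_tmul]
    rw [Finset.sum_congr rfl (fun j _ => lhsj j), ← TensorProduct.tmul_sum] at h'
    simp only [t3_tmul, LinearMap.id_coe, id_eq] at h'
    rw [hρh, hρ, Finset.sum_mul_sum]
    simp only [Algebra.TensorProduct.tmul_mul_tmul]
    rw [← hc] at h'
    exact h'.symm
  -- (3) absorption: V = ∑ S²(e j) * c * e' j
  have L3 : ∑ j, S (S (e j)) * c * e' j = V := by
    have h' := congrArg (m3 ((Algebra.linearMap k A) ∘ₗ (Coalgebra.counit (R := k) (A := A)))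
      ((S : A →ₗ[k] A) ∘ₗ (S : A →ₗ[k] A)) LinearMap.id) h3
    rw [hprod] at h'
    simp only [map_sum] at h'
    have lhsj : ∀ j, m3 ((Algebra.linearMap k A) ∘ₗ (Coalgebra.counit (R := k) (A := A)))
        ((S : A →ₗ[k] A) ∘ₗ (S : A →ₗ[k] A)) LinearMap.id
        ((TensorProduct.assoc k A A A) ((Coalgebra.comul (R := k) (e j)) ⊗ₜ[k] e' j))
        = S (S (e j)) * e' j := by
      intro j
      conv_lhs => rw [← (ℛ k (e j)).eq]
      rw [TensorProduct.sum_tmul, map_sum, map_sum]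
      simp only [TensorProduct.assoc_tmul, m3_tmul, LinearMap.comp_apply, LinearMap.id_coe,
        id_eq, Algebra.linearMap_apply]
      rw [← Finset.sum_mul]
      congr 1
      have : ∀ t, algebraMap k A (Coalgebra.counit (R := k) ((ℛ k (e j)).left t)) * S (S ((ℛ k (e j)).right t))
          = Coalgebra.counit (R := k) ((ℛ k (e j)).left t) • S (S ((ℛ k (e j)).right t)) := by
        intro t; rw [← Algebra.smul_def]
      rw [Finset.sum_congr rfl (fun t _ => this t)]
      rw [show (∑ t ∈ (ℛ k (e j)).index, Coalgebra.counit (R := k) ((ℛ k (e j)).left t) • S (S ((ℛ k (e j)).right t)))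
          = S (S (∑ t ∈ (ℛ k (e j)).index, Coalgebra.counit (R := k) ((ℛ k (e j)).left t) • (ℛ k (e j)).right t)) by
        simp only [map_sum, map_smul]]
      rw [csl (ℛ k (e j))]
    rw [Finset.sum_congr rfl (fun j _ => lhsj j)] at h'
    simp only [m3_tmul, LinearMap.comp_apply, LinearMap.id_coe, id_eq, Algebra.linearMap_apply] at h'
    rw [hV]
    rw [h']
    rw [Finset.sum_comm]
    apply Finset.sum_congr rfl; intro j _
    rw [hc, Finset.mul_sum, Finset.sum_mul]
    apply Finset.sum_congr rfl; intro i _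
    simp only [← Algebra.smul_def, mul_smul_comm, smul_mul_assoc, mul_assoc]
  -- helpers
  have Smul : ∀ a b : A, S (a * b) = S b * S a := by
    intro a b; rw [hS]; exact antipode_mul' a b
  have S1 : S (1 : A) = 1 := by rw [hS]; exact antipode_one'
  -- (4) defected intertwining
  have L4 : ∀ y : A, ρh * ((TensorProduct.comm k A A) (Coalgebra.comul (R := k) y)) * ((1:A) ⊗ₜ[k] c)
      = ((1:A) ⊗ₜ[k] c) * Coalgebra.comul (R := k) y * ρh := by
    intro y
    conv_lhs => rw [← L2b, mul_assoc,
      ← mul_assoc ((TensorProduct.comm k A A) (Coalgebra.comul (R := k) y)) ρ ρh, ← h1 y]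
    conv_rhs => rw [← L2a]
    simp only [mul_assoc]
  have hcV : c * V = V := by
    conv_lhs => rw [hV, Finset.mul_sum]
    rw [← L3]
    apply Finset.sum_congr rfl; intro j _
    rw [← mul_assoc, hcent (S (S (e j)))]
  -- Φ maps
  set Φ₁ : A ⊗[k] A →ₗ[k] A := (c2 (S : A →ₗ[k] A) LinearMap.id)
      ∘ₗ (LinearMap.mulRight k ((1:A) ⊗ₜ[k] c)) ∘ₗ (LinearMap.mulLeft k ρh)
      ∘ₗ (TensorProduct.comm k A A).toLinearMap with hΦ₁
  set Φ₂ : A ⊗[k] A →ₗ[k] A := (c2 (S : A →ₗ[k] A) LinearMap.id)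
      ∘ₗ (LinearMap.mulRight k ρh) ∘ₗ (LinearMap.mulLeft k ((1:A) ⊗ₜ[k] c)) with hΦ₂
  have PF0 : ∀ y : A, Φ₁ (Coalgebra.comul (R := k) y) = Φ₂ (Coalgebra.comul (R := k) y) := by
    intro y
    rw [hΦ₁, hΦ₂]
    simp only [LinearMap.comp_apply, LinearMap.mulLeft_apply, LinearMap.mulRight_apply,
      LinearEquiv.coe_coe]
    exact congrArg (c2 (S : A →ₗ[k] A) LinearMap.id) (L4 y)
  have PF1 : ∀ p q : A, Φ₁ (p ⊗ₜ[k] q) = S q * (V * (p * c)) := by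
    intro p q
    rw [hΦ₁]
    simp only [LinearMap.comp_apply, LinearEquiv.coe_coe, TensorProduct.comm_tmul,
      LinearMap.mulLeft_apply, LinearMap.mulRight_apply]
    rw [hρh, Finset.sum_mul, Finset.sum_mul, map_sum]
    simp only [Algebra.TensorProduct.tmul_mul_tmul, c2_tmul, LinearMap.id_coe, id_eq, mul_one]
    conv_rhs => rw [hV, Finset.sum_mul, Finset.mul_sum]
    apply Finset.sum_congr rfl; intro j _
    rw [Smul]
    simp only [mul_assoc]
  have PF2 : ∀ y : A, Φ₂ (Coalgebra.comul (R := k) y) = Coalgebra.counit (R := k) y • V := by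
    intro y
    rw [hΦ₂]
    conv_lhs => rw [← (ℛ k y).eq]
    simp only [map_sum, LinearMap.comp_apply, LinearMap.mulLeft_apply, LinearMap.mulRight_apply]
    have hterm : ∀ t ∈ (ℛ k y).index, c2 (S : A →ₗ[k] A) LinearMap.id
        ((((1:A) ⊗ₜ[k] c) * ((ℛ k y).left t ⊗ₜ[k] (ℛ k y).right t)) * ρh)
        = ∑ j, (S (S (e j)) * c) * ((S ((ℛ k y).left t) * (ℛ k y).right t) * e' j) := by
      intro t _
      rw [hρh, Algebra.TensorProduct.tmul_mul_tmul, one_mul, Finset.mul_sum, map_sum]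
      apply Finset.sum_congr rfl; intro j _
      rw [Algebra.TensorProduct.tmul_mul_tmul, c2_tmul]
      simp only [LinearMap.id_coe, id_eq]
      rw [Smul]
      rw [show (S (S (e j)) * S ((ℛ k y).left t)) * ((c * (ℛ k y).right t) * e' j)
          = S (S (e j)) * ((S ((ℛ k y).left t) * c) * ((ℛ k y).right t * e' j)) by
        simp only [mul_assoc]]
      rw [← hcent (S ((ℛ k y).left t))]
      simp only [mul_assoc]
    rw [Finset.sum_congr rfl hterm, Finset.sum_comm]
    have h5 : ∀ j, (∑ t ∈ (ℛ k y).index,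
        (S (S (e j)) * c) * ((S ((ℛ k y).left t) * (ℛ k y).right t) * e' j))
        = Coalgebra.counit (R := k) y • (S (S (e j)) * c * e' j) := by
      intro j
      have st : ∀ t ∈ (ℛ k y).index,
          (S (S (e j)) * c) * ((S ((ℛ k y).left t) * (ℛ k y).right t) * e' j)
          = ((S (S (e j)) * c) * (S ((ℛ k y).left t) * (ℛ k y).right t)) * e' j := by
        intro t _; exact (mul_assoc _ _ _).symm
      rw [Finset.sum_congr rfl st, ← Finset.sum_mul, ← Finset.mul_sum,
        HopfAlgebra.sum_antipode_mul_eq_smul (ℛ k y), mul_smul_comm, mul_one, smul_mul_assoc]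
    rw [Finset.sum_congr rfl (fun j _ => h5 j), ← Finset.smul_sum, L3]
  -- main contraction
  intro x
  set r := ℛ k x with hr
  set r1 : ∀ i : r.ι, Coalgebra.Repr k (r.left i) (A × A) := fun i => ℛ k (r.left i) with hr1
  set r2 : ∀ i : r.ι, Coalgebra.Repr k (r.right i) (A × A) := fun i => ℛ k (r.right i) with hr2
  have CE := Coalgebra.sum_tmul_tmul_eq r r1 r2
  set Ω : A ⊗[k] (A ⊗[k] A) →ₗ[k] A :=
    (m3 ((S : A →ₗ[k] A) ∘ₗ (S : A →ₗ[k] A)) (S : A →ₗ[k] A)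
      ((LinearMap.mulLeft k V) ∘ₗ (LinearMap.mulRight k c))) ∘ₗ rev3 with hΩ
  have hΩt : ∀ p q w : A, Ω (p ⊗ₜ[k] (q ⊗ₜ[k] w)) = (S (S w) * S q) * (V * (p * c)) := by
    intro p q w
    rw [hΩ]
    simp only [LinearMap.comp_apply, rev3_tmul, m3_tmul, LinearMap.mulLeft_apply,
      LinearMap.mulRight_apply]
  have hL := congrArg Ω CE
  simp only [map_sum, hΩt] at hL
  have hLHS : ∑ i ∈ r.index, ∑ j ∈ (r1 i).index,
      (S (S (r.right i)) * S ((r1 i).right j)) * (V * ((r1 i).left j * c))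
      = S (S x) * V := by
    have e1 : ∀ i ∈ r.index,
        (∑ j ∈ (r1 i).index,
          (S (S (r.right i)) * S ((r1 i).right j)) * (V * ((r1 i).left j * c)))
        = Coalgebra.counit (R := k) (r.left i) • (S (S (r.right i)) * V) := by
      intro i _
      have st : ∀ j ∈ (r1 i).index,
          (S (S (r.right i)) * S ((r1 i).right j)) * (V * ((r1 i).left j * c))
          = S (S (r.right i)) * Φ₁ ((r1 i).left j ⊗ₜ[k] (r1 i).right j) := by
        intro j _; rw [PF1]; simp only [mul_assoc]
      rw [Finset.sum_congr rfl st, ← Finset.mul_sum, ← map_sum, (r1 i).eq, PF0, PF2,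
        mul_smul_comm]
    rw [Finset.sum_congr rfl e1]
    have e1' : ∀ i ∈ r.index, Coalgebra.counit (R := k) (r.left i) • (S (S (r.right i)) * V)
        = (Coalgebra.counit (R := k) (r.left i) • S (S (r.right i))) * V := by
      intro i _; rw [smul_mul_assoc]
    rw [Finset.sum_congr rfl e1', ← Finset.sum_mul]
    congr 1
    simp only [← map_smul]
    rw [← map_sum, ← map_sum, csl r]
  have hRHS : ∑ i ∈ r.index, ∑ j ∈ (r2 i).index,
      (S (S ((r2 i).right j)) * S ((r2 i).left j)) * (V * (r.left i * c))
      = V * (x * c) := by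
    have SQ : ∀ i ∈ r.index, ∑ j ∈ (r2 i).index, S (S ((r2 i).right j)) * S ((r2 i).left j)
        = Coalgebra.counit (R := k) (r.right i) • (1:A) := by
      intro i _
      have st : ∀ j ∈ (r2 i).index, S (S ((r2 i).right j)) * S ((r2 i).left j)
          = S ((r2 i).left j * S ((r2 i).right j)) := by
        intro j _; rw [Smul]
      rw [Finset.sum_congr rfl st, ← map_sum, HopfAlgebra.sum_mul_antipode_eq_smul (r2 i),
        map_smul, S1]
    have e2 : ∀ i ∈ r.index,
        (∑ j ∈ (r2 i).index, (S (S ((r2 i).right j)) * S ((r2 i).left j)) * (V * (r.left i * c)))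
        = Coalgebra.counit (R := k) (r.right i) • (V * (r.left i * c)) := by
      intro i hi
      rw [← Finset.sum_mul, SQ i hi, smul_mul_assoc, one_mul]
    rw [Finset.sum_congr rfl e2]
    have e2' : ∀ i ∈ r.index, Coalgebra.counit (R := k) (r.right i) • (V * (r.left i * c))
        = V * ((Coalgebra.counit (R := k) (r.right i) • r.left i) * c) := by
      intro i _; rw [smul_mul_assoc, mul_smul_comm]
    rw [Finset.sum_congr rfl e2', ← Finset.mul_sum, ← Finset.sum_mul, csr r]
  rw [hLHS, hRHS] at hL
  calc V * x = (c * V) * x := by rw [hcV]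
    _ = c * (V * x) := by rw [mul_assoc]
    _ = (V * x) * c := by rw [hcent]
    _ = V * (x * c) := by rw [mul_assoc]
    _ = S (S x) * V := hL.symm
end

/-- In a quasitriangular Hopf algebra augmented by a grouplike `G` with `s²(x) = G x G⁻¹`,
the element `X = ∑ e * s⁻²(e') * G⁻¹` is central. -/
theorem centrality_of_curl_element
    {k : Type*} [Field k] {A : Type*} [Ring A] [HopfAlgebra k A]
    {ι : Type*} [Fintype ι] (e e' : ι → A)
    (ρ : A ⊗[k] A) (hρ : ρ = ∑ j, e j ⊗ₜ[k] e' j)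
    -- intertwining: ρ Δ(x) = Δᵒᵖ(x) ρ
    (h1 : ∀ x : A, ρ * Coalgebra.comul x
        = (TensorProduct.comm k A A) (Coalgebra.comul x) * ρ)
    -- (1 ⊗ Δ)ρ = ρ₁₃ ρ₁₂
    (h2 : ∑ j, e j ⊗ₜ[k] (Coalgebra.comul (R := k) (e' j))
        = (∑ j, e j ⊗ₜ[k] ((1 : A) ⊗ₜ[k] e' j)) * (∑ j, e j ⊗ₜ[k] (e' j ⊗ₜ[k] (1 : A))))
    -- (Δ ⊗ 1)ρ = ρ₁₃ ρ₂₃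
    (h3 : ∑ j, (TensorProduct.assoc k A A A) ((Coalgebra.comul (R := k) (e j)) ⊗ₜ[k] e' j)
        = (∑ j, e j ⊗ₜ[k] ((1 : A) ⊗ₜ[k] e' j)) * (∑ j, (1 : A) ⊗ₜ[k] (e j ⊗ₜ[k] e' j)))
    (sInv : A →ₗ[k] A)
    (hsInv : ∀ x : A, sInv (HopfAlgebra.antipode (R := k) x) = x)
    (hsInv' : ∀ x : A, HopfAlgebra.antipode (R := k) (sInv x) = x)
    (G Ginv : A) (hG : G * Ginv = 1) (hG' : Ginv * G = 1)
    (hGgrp : Coalgebra.comul (R := k) G = G ⊗ₜ[k] G) (hGε : Coalgebra.counit (R := k) G = 1)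
    (hs2 : ∀ x : A, HopfAlgebra.antipode (R := k) (HopfAlgebra.antipode (R := k) x)
        = G * x * Ginv) :
    ∀ a : A, a * ((∑ j, e j * sInv (sInv (e' j))) * Ginv)
      = ((∑ j, e j * sInv (sInv (e' j))) * Ginv) * a := by
  intro a
  have hVX := main_VX e e' ρ hρ h1 h3
  have sInv_mul : ∀ p q : A, sInv (p * q) = sInv q * sInv p := by
    intro p q
    have h1' : HopfAlgebra.antipode (R := k) (sInv q * sInv p) = p * q := by
      rw [antipode_mul', hsInv', hsInv']
    calc sInv (p * q) = sInv (HopfAlgebra.antipode (R := k) (sInv q * sInv p)) := by rw [h1']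
      _ = sInv q * sInv p := hsInv _
  set v : A := ∑ j, e j * sInv (sInv (e' j)) with hv
  have hsv : sInv (sInv (∑ j, HopfAlgebra.antipode (R := k)
      (HopfAlgebra.antipode (R := k) (e j)) * e' j)) = v := by
    rw [map_sum]
    have s1 : ∀ j : ι, sInv (HopfAlgebra.antipode (R := k)
        (HopfAlgebra.antipode (R := k) (e j)) * e' j)
        = sInv (e' j) * HopfAlgebra.antipode (R := k) (e j) := by
      intro j; rw [sInv_mul, hsInv]
    rw [Finset.sum_congr rfl (fun j _ => s1 j), map_sum]
    have s2 : ∀ j : ι, sInv (sInv (e' j) * HopfAlgebra.antipode (R := k) (e j))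
        = e j * sInv (sInv (e' j)) := by
      intro j; rw [sInv_mul, hsInv]
    rw [Finset.sum_congr rfl (fun j _ => s2 j), hv]
  have hvV : ∀ x : A, v * sInv (sInv x) = x * v := by
    intro x
    have h := hVX x
    have h2 := congrArg sInv h
    rw [sInv_mul, sInv_mul, hsInv] at h2
    have h3' := congrArg sInv h2
    rw [sInv_mul, sInv_mul, hsInv] at h3'
    rw [hsv] at h3'
    exact h3'
  have hGinvA : ∀ x : A, Ginv * x = sInv (sInv x) * Ginv := by
    intro x
    have h := hs2 (sInv (sInv x))
    rw [hsInv', hsInv'] at h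
    conv_lhs => rw [h]
    rw [← mul_assoc, ← mul_assoc, hG', one_mul]
  have final : (v * Ginv) * a = a * (v * Ginv) := by
    calc (v * Ginv) * a = v * (Ginv * a) := by rw [mul_assoc]
      _ = v * (sInv (sInv a) * Ginv) := by rw [hGinvA a]
      _ = (v * sInv (sInv a)) * Ginv := by rw [mul_assoc]
      _ = (a * v) * Ginv := by rw [hvV a]
      _ = a * (v * Ginv) := by rw [mul_assoc]
  exact final.symm
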